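/- The function h(z) defined via w(z) by h(z) = (w(z)² - σ⁴c)/(w(z)(w(z) + σ²c)) satisfies the identity h(z) = z m(z)² m̃(z) / (d/dz)(z m(z) m̃(z)), for z real with z > σ²(1+√c)², where m, m̃ are the Marcenko-Pastur Stieltjes transforms satisfying the coupled fixed-point equations. -/

import Mathlib

/-- For `z > σ²(1+√c)²` real, with `m, m̃` the Marcenko-Pastur Stieltjes transforms
satisfying the coupled fixed-point equations (differentiable there), and
`w(z) = 1/(z m(z) m̃(z))`, the function `h(z) = (w² - σ⁴c)/(w(w+σ²c))` satisfies
`h(z) = z m(z)² m̃(z) / (z m(z) m̃(z))'`. -/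
theorem stmt6 (σ2 c : ℝ) (hσ : 0 < σ2) (hc : 0 < c) (m mt : ℝ → ℂ)
    (hdm : ∀ x ∈ Set.Ioi (σ2 * (1 + Real.sqrt c) ^ 2),
      DifferentiableAt ℝ m x ∧ DifferentiableAt ℝ mt x)
    (heq : ∀ x ∈ Set.Ioi (σ2 * (1 + Real.sqrt c) ^ 2),
      m x = 1 / (-(x : ℂ) * (1 + (σ2 : ℂ) * mt x)) ∧
        mt x = 1 / (-(x : ℂ) * (1 + (σ2 : ℂ) * (c : ℂ) * m x)))
    (x : ℝ) (hx : x ∈ Set.Ioi (σ2 * (1 + Real.sqrt c) ^ 2))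
    (w : ℂ) (hw : w = 1 / ((x : ℂ) * m x * mt x)) (hw0 : w ≠ 0)
    (hw2 : w * (w + (σ2 : ℂ) * (c : ℂ)) ≠ 0)
    (hg : deriv (fun t : ℝ => (t : ℂ) * m t * mt t) x ≠ 0) :
    (w ^ 2 - (σ2 : ℂ) ^ 2 * (c : ℂ)) / (w * (w + (σ2 : ℂ) * (c : ℂ))) =
      (x : ℂ) * (m x) ^ 2 * mt x / deriv (fun t : ℝ => (t : ℂ) * m t * mt t) x := by
  have hsc : (0:ℝ) < Real.sqrt c := Real.sqrt_pos.mpr hc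
  have hscsq : Real.sqrt c ^ 2 = c := Real.sq_sqrt hc.le
  -- every t in the interval is > σ2 and > σ2*c and > 0
  have hbig : ∀ t ∈ Set.Ioi (σ2 * (1 + Real.sqrt c) ^ 2), σ2 < t ∧ σ2 * c < t ∧ 0 < t := by
    intro t ht
    have ht' : σ2 * (1 + Real.sqrt c) ^ 2 < t := ht
    constructor
    · nlinarith
    constructor
    · nlinarith
    · nlinarith
  -- the fixed point equations in product form
  have key : ∀ t : ℝ, t ∈ Set.Ioi (σ2 * (1 + Real.sqrt c) ^ 2) →
      (t:ℂ) * m t + 1 + (σ2:ℂ) * ((t:ℂ) * m t * mt t) = 0 ∧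
      (t:ℂ) * mt t + 1 + (σ2:ℂ) * (c:ℂ) * ((t:ℂ) * m t * mt t) = 0 := by
    intro t ht
    obtain ⟨e1, e2⟩ := heq t ht
    obtain ⟨hts, htsc, ht0⟩ := hbig t ht
    have ht0' : (t:ℂ) ≠ 0 := by
      simpa using Complex.ofReal_ne_zero.mpr ht0.ne'
    have hσ0 : (σ2:ℂ) ≠ 0 := Complex.ofReal_ne_zero.mpr hσ.ne'
    have hc0 : (c:ℂ) ≠ 0 := Complex.ofReal_ne_zero.mpr hc.ne'
    have hB : (1 + (σ2:ℂ) * (c:ℂ) * m t) ≠ 0 := by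
      intro hB0
      rw [hB0, mul_zero, one_div, inv_zero] at e2
      rw [e2, mul_zero, add_zero, mul_one] at e1
      rw [e1] at hB0
      field_simp [ht0'] at hB0
      have h' : (t:ℂ) = ((σ2 * c : ℝ) : ℂ) := by push_cast; linear_combination hB0
      have : t = σ2 * c := by exact_mod_cast h'
      linarith
    have hA : (1 + (σ2:ℂ) * mt t) ≠ 0 := by
      intro hA0
      rw [hA0, mul_zero, one_div, inv_zero] at e1
      rw [e1] at e2
      simp at e2
      rw [e2] at hA0
      field_simp [ht0'] at hA0
      have h' : (t:ℂ) = ((σ2 : ℝ) : ℂ) := by push_cast; linear_combination hA0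
      have : t = σ2 := by exact_mod_cast h'
      linarith
    have p1 : m t * (-(t:ℂ) * (1 + (σ2:ℂ) * mt t)) = 1 := by
      rw [e1]; field_simp
    have p2 : mt t * (-(t:ℂ) * (1 + (σ2:ℂ) * (c:ℂ) * m t)) = 1 := by
      rw [e2]; field_simp
    constructor
    · linear_combination -p1
    · linear_combination -p2
  obtain ⟨hdm1, hdm2⟩ := hdm x hx
  obtain ⟨k1, k2⟩ := key x hx
  obtain ⟨hxs, hxsc, hx0⟩ := hbig x hx
  have hX0 : (x:ℂ) ≠ 0 := by
    simpa using Complex.ofReal_ne_zero.mpr hx0.ne'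
  have hG0 : ((x:ℂ) * m x * mt x) ≠ 0 := by
    intro h0
    apply hw0
    rw [hw, h0]
    simp
  -- derivative of g
  have hdmx : DifferentiableAt ℝ (fun t : ℝ => (t : ℂ) * m t * mt t) x := by
    exact ((Complex.ofRealCLM.differentiableAt.mul hdm1).mul hdm2)
  set d : ℂ := deriv (fun t : ℝ => (t : ℂ) * m t * mt t) x with hdd
  have hdg : HasDerivAt (fun t : ℝ => (t : ℂ) * m t * mt t) d x := hdmx.hasDerivAt
  have hone : HasDerivAt (fun t : ℝ => (t : ℂ)) 1 x := by
    simpa using (hasDerivAt_id x).ofReal_comp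
  have hL : HasDerivAt (fun t : ℝ => (t:ℂ) * ((t:ℂ) * m t * mt t))
      (1 * ((x:ℂ) * m x * mt x) + (x:ℂ) * d) x := hone.mul hdg
  have hR : HasDerivAt
      (fun t : ℝ => (1 + (σ2:ℂ) * ((t:ℂ) * m t * mt t)) * (1 + (σ2:ℂ) * (c:ℂ) * ((t:ℂ) * m t * mt t)))
      (((σ2:ℂ) * d) * (1 + (σ2:ℂ) * (c:ℂ) * ((x:ℂ) * m x * mt x))
        + (1 + (σ2:ℂ) * ((x:ℂ) * m x * mt x)) * ((σ2:ℂ) * (c:ℂ) * d)) x :=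
    ((hdg.const_mul (σ2:ℂ)).const_add 1).mul ((hdg.const_mul ((σ2:ℂ) * (c:ℂ))).const_add 1)
  have hEv : (fun t : ℝ => (t:ℂ) * ((t:ℂ) * m t * mt t)) =ᶠ[nhds x]
      (fun t : ℝ => (1 + (σ2:ℂ) * ((t:ℂ) * m t * mt t)) * (1 + (σ2:ℂ) * (c:ℂ) * ((t:ℂ) * m t * mt t))) := by
    filter_upwards [isOpen_Ioi.mem_nhds hx] with t ht
    obtain ⟨q1, q2⟩ := key t ht
    linear_combination ((t:ℂ) * mt t) * q1 - (1 + (σ2:ℂ) * ((t:ℂ) * m t * mt t)) * q2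
  have hstar : 1 * ((x:ℂ) * m x * mt x) + (x:ℂ) * d =
      ((σ2:ℂ) * d) * (1 + (σ2:ℂ) * (c:ℂ) * ((x:ℂ) * m x * mt x))
        + (1 + (σ2:ℂ) * ((x:ℂ) * m x * mt x)) * ((σ2:ℂ) * (c:ℂ) * d) :=
    hL.unique (hR.congr_of_eventuallyEq hEv)
  have hKx : (x:ℂ) * ((x:ℂ) * m x * mt x) =
      (1 + (σ2:ℂ) * ((x:ℂ) * m x * mt x)) * (1 + (σ2:ℂ) * (c:ℂ) * ((x:ℂ) * m x * mt x)) := by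
    linear_combination ((x:ℂ) * mt x) * k1 - (1 + (σ2:ℂ) * ((x:ℂ) * m x * mt x)) * k2
  have hT3 : (1 - (σ2:ℂ)^2 * (c:ℂ) * ((x:ℂ) * m x * mt x)^2) * d = -((x:ℂ) * m x * mt x)^2 := by
    linear_combination ((x:ℂ) * m x * mt x) * hstar - d * hKx
  have hT2' : (x:ℂ) * ((1 - (σ2:ℂ)^2 * (c:ℂ) * ((x:ℂ) * m x * mt x)^2) * d) =
      (x:ℂ) * ((((x:ℂ) * m x * mt x) * m x) * (1 + (σ2:ℂ) * (c:ℂ) * ((x:ℂ) * m x * mt x))) := by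
    linear_combination (x:ℂ) * hT3
      - (((x:ℂ) * m x * mt x) * (1 + (σ2:ℂ) * (c:ℂ) * ((x:ℂ) * m x * mt x))) * k1
      - ((x:ℂ) * m x * mt x) * hKx
  have hT2 := mul_left_cancel₀ hX0 hT2'
  rw [div_eq_div_iff hw2 hg, hw]
  field_simp [right_ne_zero_of_mul hG0, right_ne_zero_of_mul (left_ne_zero_of_mul hG0)]
  linear_combination hT2
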